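/- Let Y₁, …, Y_N be closed subspaces of a Hilbert space X, P_k the orthogonal projection onto Y_k, P the orthogonal projection onto Y = Y₁ ∩ ⋯ ∩ Y_N, and T = P_N ⋯ P₁. Then for every x ∈ X, ‖T^n x − P x‖ → 0 as n → ∞ (Halperin's theorem). -/

import Mathlib

open Filter Topology

open scoped ComplexInnerProductSpace

section HalperinAux

variable {X : Type*} [NormedAddCommGroup X] [InnerProductSpace ℂ X]

/-- A "good projection": an operator that is the orthogonal projection onto some
subspace `K` containing `Y0`. -/
def HalperinGoodProj (Y0 : Submodule ℂ X) (Q : X →L[ℂ] X) : Prop :=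
  ∃ K : Submodule ℂ X, Y0 ≤ K ∧ (∀ x, Q x ∈ K) ∧ (∀ y ∈ K, Q y = y) ∧ (∀ x, x - Q x ∈ Kᗮ)

theorem HalperinGoodProj.pyth {Y0 : Submodule ℂ X} {Q : X →L[ℂ] X}
    (h : HalperinGoodProj Y0 Q) (u : X) :
    ‖Q u‖ ^ 2 + ‖u - Q u‖ ^ 2 = ‖u‖ ^ 2 := by
  obtain ⟨K, -, hm, -, ho⟩ := h
  have h0 : ⟪Q u, u - Q u⟫ = 0 :=
    Submodule.inner_right_of_mem_orthogonal (hm u) (ho u)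
  have h1 := norm_add_sq (𝕜 := ℂ) (Q u) (u - Q u)
  have h2 : Q u + (u - Q u) = u := by abel
  rw [h2, h0] at h1
  simp at h1
  linarith

theorem HalperinGoodProj.norm_le {Y0 : Submodule ℂ X} {Q : X →L[ℂ] X}
    (h : HalperinGoodProj Y0 Q) (u : X) : ‖Q u‖ ≤ ‖u‖ := by
  have h1 := h.pyth u
  nlinarith [norm_nonneg (Q u), norm_nonneg u, sq_nonneg ‖u - Q u‖]

theorem HalperinGoodProj.fix {Y0 : Submodule ℂ X} {Q : X →L[ℂ] X}
    (h : HalperinGoodProj Y0 Q) {y : X} (hy : y ∈ Y0) : Q y = y := by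
  obtain ⟨K, hle, -, hf, -⟩ := h
  exact hf y (hle hy)

theorem halperin_list_norm_le {Y0 : Submodule ℂ X} :
    ∀ (l : List (X →L[ℂ] X)), (∀ Q ∈ l, HalperinGoodProj Y0 Q) → ∀ u : X, ‖l.prod u‖ ≤ ‖u‖
  | [], _, u => by simp
  | Q :: l, h, u => by
    rw [List.prod_cons, ContinuousLinearMap.mul_apply]
    exact ((h Q (List.mem_cons_self)).norm_le _).trans
      (halperin_list_norm_le l (fun R hR => h R (List.mem_cons_of_mem _ hR)) u)

theorem halperin_list_fix {Y0 : Submodule ℂ X} :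
    ∀ (l : List (X →L[ℂ] X)), (∀ Q ∈ l, HalperinGoodProj Y0 Q) →
      ∀ y ∈ Y0, l.prod y = y
  | [], _, y, _ => by simp
  | Q :: l, h, y, hy => by
    rw [List.prod_cons, ContinuousLinearMap.mul_apply,
      halperin_list_fix l (fun R hR => h R (List.mem_cons_of_mem _ hR)) y hy]
    exact (h Q (List.mem_cons_self)).fix hy

theorem halperin_list_diff {Y0 : Submodule ℂ X} :
    ∀ (l : List (X →L[ℂ] X)), (∀ Q ∈ l, HalperinGoodProj Y0 Q) →
      ∀ u : X, ‖u - l.prod u‖ ≤ l.length * Real.sqrt (‖u‖ ^ 2 - ‖l.prod u‖ ^ 2)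
  | [], _, u => by simp
  | Q :: l, h, u => by
    have hQ : HalperinGoodProj Y0 Q := h Q (List.mem_cons_self)
    have hl : ∀ R ∈ l, HalperinGoodProj Y0 R := fun R hR => h R (List.mem_cons_of_mem _ hR)
    rw [List.prod_cons, ContinuousLinearMap.mul_apply]
    set v := l.prod u with hv
    have hQv : ‖Q v‖ ≤ ‖v‖ := hQ.norm_le v
    have hvu : ‖v‖ ≤ ‖u‖ := halperin_list_norm_le l hl u
    have hIH := halperin_list_diff l hl u
    rw [← hv] at hIH
    have hpy := hQ.pyth v
    have hb : ‖v - Q v‖ = Real.sqrt (‖v‖ ^ 2 - ‖Q v‖ ^ 2) := by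
      rw [show ‖v‖ ^ 2 - ‖Q v‖ ^ 2 = ‖v - Q v‖ ^ 2 by linarith, Real.sqrt_sq (norm_nonneg _)]
    have hmono1 : Real.sqrt (‖u‖ ^ 2 - ‖v‖ ^ 2) ≤ Real.sqrt (‖u‖ ^ 2 - ‖Q v‖ ^ 2) := by
      apply Real.sqrt_le_sqrt
      nlinarith [norm_nonneg (Q v), norm_nonneg v]
    have hmono2 : Real.sqrt (‖v‖ ^ 2 - ‖Q v‖ ^ 2) ≤ Real.sqrt (‖u‖ ^ 2 - ‖Q v‖ ^ 2) := by
      apply Real.sqrt_le_sqrt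
      nlinarith [norm_nonneg v, norm_nonneg u]
    have htri : ‖u - Q v‖ ≤ ‖u - v‖ + ‖v - Q v‖ := by
      have := dist_triangle u v (Q v)
      simpa [dist_eq_norm] using this
    have hlen : (((Q :: l).length : ℕ) : ℝ) = (l.length : ℝ) + 1 := by
      push_cast [List.length_cons]; ring
    rw [hlen]
    calc ‖u - Q v‖ ≤ ‖u - v‖ + ‖v - Q v‖ := htri
      _ ≤ (l.length : ℝ) * Real.sqrt (‖u‖ ^ 2 - ‖v‖ ^ 2)
            + Real.sqrt (‖v‖ ^ 2 - ‖Q v‖ ^ 2) := by rw [hb]; exact add_le_add hIH le_rfl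
      _ ≤ (l.length : ℝ) * Real.sqrt (‖u‖ ^ 2 - ‖Q v‖ ^ 2)
            + Real.sqrt (‖u‖ ^ 2 - ‖Q v‖ ^ 2) := by
          exact add_le_add (mul_le_mul_of_nonneg_left hmono1 (by positivity)) hmono2
      _ = ((l.length : ℝ) + 1) * Real.sqrt (‖u‖ ^ 2 - ‖Q v‖ ^ 2) := by ring

theorem halperin_list_fix_of_prod_fix {Y0 : Submodule ℂ X} :
    ∀ (l : List (X →L[ℂ] X)), (∀ Q ∈ l, HalperinGoodProj Y0 Q) →
      ∀ u : X, l.prod u = u → ∀ Q ∈ l, Q u = u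
  | [], _, u, _, Q, hQ => absurd hQ List.not_mem_nil
  | Q :: l, h, u, hu, R, hR => by
    have hQ : HalperinGoodProj Y0 Q := h Q (List.mem_cons_self)
    have hl : ∀ S ∈ l, HalperinGoodProj Y0 S := fun S hS => h S (List.mem_cons_of_mem _ hS)
    rw [List.prod_cons, ContinuousLinearMap.mul_apply] at hu
    set v := l.prod u with hv
    have h1 : ‖v‖ ≤ ‖u‖ := halperin_list_norm_le l hl u
    have h2 : ‖Q v‖ ≤ ‖v‖ := hQ.norm_le v
    have h3 : ‖Q v‖ = ‖u‖ := by rw [hu]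
    have h4 : ‖v‖ = ‖u‖ := le_antisymm h1 (h3 ▸ h2)
    have h5 := hQ.pyth v
    have h6' : ‖v - Q v‖ ^ 2 = 0 := by
      have he : ‖Q v‖ = ‖v‖ := h3.trans h4.symm
      rw [he] at h5
      linarith
    have h6 : v - Q v = 0 := by
      rw [← norm_eq_zero]
      exact (pow_eq_zero_iff two_ne_zero).mp h6'
    have h7 : Q v = v := by rw [← sub_eq_zero, ← neg_sub v (Q v), h6, neg_zero]
    have h8 : v = u := by rw [← h7, hu]
    rcases List.mem_cons.mp hR with rfl | hR'
    · rw [h8] at h7; exact h7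
    · have h9 : l.prod u = u := by rw [← hv, h8]
      exact halperin_list_fix_of_prod_fix l hl u h9 R hR'

end HalperinAux

/-- Halperin's theorem: for `T = P_N ⋯ P_1` the product of orthogonal projections onto
closed subspaces `Y_1, …, Y_N` (`N ≥ 2`) of a Hilbert space, and `P` the orthogonal
projection onto `Y_1 ∩ ⋯ ∩ Y_N`, one has `‖T^n x - P x‖ → 0` for every `x`. -/
theorem stmt13 {X : Type*} [NormedAddCommGroup X] [InnerProductSpace ℂ X] [CompleteSpace X]
    (N : ℕ) (hN : 2 ≤ N) (Y : Fin N → Submodule ℂ X) (hYc : ∀ k, IsClosed (Y k : Set X))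
    (P : Fin N → (X →L[ℂ] X))
    (hmem : ∀ k x, P k x ∈ Y k)
    (hfix : ∀ k, ∀ y ∈ Y k, P k y = y)
    (horth : ∀ k x, x - P k x ∈ (Y k)ᗮ)
    (T : X →L[ℂ] X) (hT : T = (List.ofFn P).reverse.prod)
    (P0 : X →L[ℂ] X)
    (hmem0 : ∀ x, P0 x ∈ ⨅ k, Y k)
    (hfix0 : ∀ y ∈ ⨅ k, Y k, P0 y = y)
    (horth0 : ∀ x, x - P0 x ∈ (⨅ k, Y k)ᗮ) :
    ∀ x : X, Tendsto (fun n : ℕ => ‖(T ^ n) x - P0 x‖) atTop (𝓝 0) := by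
  set Y0 : Submodule ℂ X := ⨅ k, Y k with hY0
  set L : List (X →L[ℂ] X) := (List.ofFn P).reverse with hL
  have hgood : ∀ Q ∈ L, HalperinGoodProj Y0 Q := by
    intro Q hQ
    rw [hL, List.mem_reverse, List.mem_ofFn] at hQ
    obtain ⟨k, rfl⟩ := hQ
    exact ⟨Y k, iInf_le Y k, hmem k, hfix k, horth k⟩
  have hLlen : (L.length : ℝ) = (N : ℝ) := by simp [hL]
  -- basic properties of T
  have hTle : ∀ u : X, ‖T u‖ ≤ ‖u‖ := by
    intro u; rw [hT]; exact halperin_list_norm_le L hgood u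
  have hTfix : ∀ y ∈ Y0, T y = y := by
    intro y hy; rw [hT]; exact halperin_list_fix L hgood y hy
  have hTdiff : ∀ u : X, ‖u - T u‖ ≤ (N : ℝ) * Real.sqrt (‖u‖ ^ 2 - ‖T u‖ ^ 2) := by
    intro u
    have := halperin_list_diff L hgood u
    rw [hLlen] at this
    rw [hT]
    exact this
  have hTfixmem : ∀ u : X, T u = u → u ∈ Y0 := by
    intro u hu
    rw [hT] at hu
    have := halperin_list_fix_of_prod_fix L hgood u hu
    rw [hY0, Submodule.mem_iInf]
    intro k
    have hk : P k ∈ L := by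
      rw [hL, List.mem_reverse, List.mem_ofFn]
      exact ⟨k, rfl⟩
    rw [← this (P k) hk]
    exact hmem k u
  -- powers of T
  have hpow_le : ∀ (n : ℕ) (u : X), ‖(T ^ n) u‖ ≤ ‖u‖ := by
    intro n
    induction n with
    | zero => intro u; simp
    | succ n ih =>
        intro u
        rw [pow_succ, ContinuousLinearMap.mul_apply]
        exact (ih (T u)).trans (hTle u)
  have hanti : ∀ (w : X), Antitone fun n : ℕ => ‖(T ^ n) w‖ := by
    intro w
    apply antitone_nat_of_succ_le
    intro n
    rw [pow_succ', ContinuousLinearMap.mul_apply]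
    exact hTle _
  intro x
  have hpowfix : ∀ n : ℕ, (T ^ n) (P0 x) = P0 x := by
    intro n
    induction n with
    | zero => simp
    | succ n ih => rw [pow_succ', ContinuousLinearMap.mul_apply, ih, hTfix _ (hmem0 x)]
  set z := x - P0 x with hzdef
  have key : ∀ n : ℕ, (T ^ n) x - P0 x = (T ^ n) z := by
    intro n
    rw [hzdef, map_sub, hpowfix n]
  -- z belongs to the closure of the range of 1 - T
  set R : Submodule ℂ X := LinearMap.range (((1 - T : X →L[ℂ] X) : X →ₗ[ℂ] X)) with hR
  have hRorth : Rᗮ ≤ Y0 := by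
    intro e he
    have hmemR : (1 - T) e ∈ R := LinearMap.mem_range_self _ e
    have h0 : ⟪(1 - T) e, e⟫ = 0 :=
      Submodule.inner_right_of_mem_orthogonal hmemR he
    have h1 : ⟪e - T e, e⟫ = 0 := by
      rwa [ContinuousLinearMap.sub_apply, ContinuousLinearMap.one_apply] at h0
    have h2 : ⟪T e, e⟫ = ⟪e, e⟫ := by
      rw [inner_sub_left] at h1
      linear_combination -h1
    have h3 : T e = e := by
      apply eq_of_norm_le_re_inner_eq_norm_sq (𝕜 := ℂ) (hTle e)
      rw [h2, ← InnerProductSpace.norm_sq_eq_re_inner (𝕜 := ℂ)]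
    exact hTfixmem e h3
  have hzR : z ∈ closure (R : Set X) := by
    have h1 : Y0ᗮ ≤ Rᗮᗮ := Submodule.orthogonal_le hRorth
    have h2 : Rᗮᗮ = R.topologicalClosure := R.orthogonal_orthogonal_eq_closure
    have hz : z ∈ Y0ᗮ := horth0 x
    have := h1 hz
    rw [h2] at this
    exact this
  -- the convergence
  have hconv : ∀ n : ℕ, ‖(T ^ n) x - P0 x‖ = ‖(T ^ n) z‖ := fun n => by rw [key n]
  simp only [hconv]
  rw [Metric.tendsto_atTop]
  intro ε hε
  obtain ⟨u, huR, hud⟩ := Metric.mem_closure_iff.mp hzR (ε / 2) (by linarith)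
  obtain ⟨w, rfl⟩ := huR
  -- the sequence n ↦ ‖(T^n) w‖ converges, hence is "asymptotically regular"
  set c : ℕ → ℝ := fun n => ‖(T ^ n) w‖ with hc
  have hcL : Tendsto c atTop (𝓝 (⨅ n, c n)) :=
    tendsto_atTop_ciInf (hanti w) ⟨0, fun r ⟨n, hn⟩ => hn ▸ norm_nonneg _⟩
  have hcsq : Tendsto (fun n => c n ^ 2 - c (n + 1) ^ 2) atTop (𝓝 0) := by
    have h1 : Tendsto (fun n => c (n + 1)) atTop (𝓝 (⨅ n, c n)) :=
      hcL.comp (tendsto_add_atTop_nat 1)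
    have := (hcL.pow 2).sub (h1.pow 2)
    simpa using this
  have hd : Tendsto (fun n => (N : ℝ) * Real.sqrt (c n ^ 2 - c (n + 1) ^ 2)) atTop (𝓝 0) := by
    have := hcsq.sqrt
    rw [Real.sqrt_zero] at this
    simpa using this.const_mul (N : ℝ)
  rw [Metric.tendsto_atTop] at hd
  obtain ⟨n0, hn0⟩ := hd (ε / 2) (by linarith)
  refine ⟨n0, fun n hn => ?_⟩
  have hdn := hn0 n hn
  rw [Real.dist_eq, sub_zero, abs_of_nonneg (by positivity)] at hdn
  -- estimate ‖(T^n) z‖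
  have hTnu : ‖(T ^ n) ((1 - T) w)‖ ≤ (N : ℝ) * Real.sqrt (c n ^ 2 - c (n + 1) ^ 2) := by
    have e1 : (T ^ n) ((1 - T) w) = (T ^ n) w - T ((T ^ n) w) := by
      rw [ContinuousLinearMap.sub_apply, ContinuousLinearMap.one_apply, map_sub]
      congr 1
      rw [← ContinuousLinearMap.mul_apply, ← ContinuousLinearMap.mul_apply, ← pow_succ,
        ← pow_succ']
    rw [e1]
    have := hTdiff ((T ^ n) w)
    have e2 : ‖T ((T ^ n) w)‖ = c (n + 1) := by
      rw [hc]
      simp only []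
      rw [pow_succ', ContinuousLinearMap.mul_apply]
    rw [e2] at this
    exact this
  have hz2 : ‖(T ^ n) (z - (1 - T) w)‖ ≤ ‖z - (1 - T) w‖ := hpow_le n _
  have hfinal : ‖(T ^ n) z‖ ≤ ‖(T ^ n) ((1 - T) w)‖ + ‖z - (1 - T) w‖ := by
    have e3 : (T ^ n) z = (T ^ n) ((1 - T) w) + (T ^ n) (z - (1 - T) w) := by
      rw [← map_add]
      congr 1
      abel
    rw [e3]
    exact (norm_add_le _ _).trans (by gcongr)
  rw [Real.dist_eq, sub_zero, abs_of_nonneg (norm_nonneg _)]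
  have hud' : ‖z - (1 - T) w‖ < ε / 2 := by rwa [dist_eq_norm] at hud
  calc ‖(T ^ n) z‖ ≤ ‖(T ^ n) ((1 - T) w)‖ + ‖z - (1 - T) w‖ := hfinal
    _ < ε / 2 + ε / 2 := by
        apply add_lt_add_of_le_of_lt _ hud'
        exact hTnu.trans hdn.le
    _ = ε := by ring
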